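/- Let ℓ be a natural number and W₁, W₂ ∈ ℂ^{ℓ×ℓ} be complex matrices such that the ℓ×2ℓ block matrix W = [W₁ W₂] has full row rank ℓ and the matrix W₁W₂* + W₂W₁* is positive semidefinite (where * denotes conjugate transpose). Then the linear relation ker[W₁ W₂] = {(f, g) ∈ ℂ^ℓ × ℂ^ℓ : W₁f + W₂g = 0} is maximally dissipative, i.e., Re⟨f, g⟩ ≤ 0 for every (f, g) ∈ ker[W₁ W₂], and every dissipative linear relation on ℂ^ℓ containing ker[W₁ W₂] equals ker[W₁ W₂]. -/

import Mathlib

open Matrix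
open scoped ComplexOrder

/-- The linear relation `ker [W₁ W₂] = {(f, g) : W₁ f + W₂ g = 0}` on `ℂ^ℓ`. -/
noncomputable def kerRel {ℓ : ℕ} (W₁ W₂ : Matrix (Fin ℓ) (Fin ℓ) ℂ) :
    Submodule ℂ ((Fin ℓ → ℂ) × (Fin ℓ → ℂ)) :=
  LinearMap.ker
    (W₁.mulVecLin.comp (LinearMap.fst ℂ (Fin ℓ → ℂ) (Fin ℓ → ℂ)) +
      W₂.mulVecLin.comp (LinearMap.snd ℂ (Fin ℓ → ℂ) (Fin ℓ → ℂ)))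

/-- A linear relation `T` on `ℂ^ℓ` is dissipative if `Re ⟨f, g⟩ ≤ 0` for all `(f, g) ∈ T`,
where `⟨f, g⟩ = ∑ i, conj (f i) * g i` is the standard Hermitian inner product. -/
def IsDissipativeRel {ℓ : ℕ} (T : Submodule ℂ ((Fin ℓ → ℂ) × (Fin ℓ → ℂ))) : Prop :=
  ∀ p ∈ T, (star p.1 ⬝ᵥ p.2).re ≤ 0

/-- A linear relation is maximally dissipative if it is dissipative and every dissipative
linear relation containing it equals it. -/
def IsMaxDissipativeRel {ℓ : ℕ} (T : Submodule ℂ ((Fin ℓ → ℂ) × (Fin ℓ → ℂ))) : Prop :=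
  IsDissipativeRel T ∧ ∀ T' : Submodule ℂ ((Fin ℓ → ℂ) × (Fin ℓ → ℂ)),
    IsDissipativeRel T' → T ≤ T' → T' = T



lemma aux_isUnit_of_posDef {ℓ : ℕ} (M : Matrix (Fin ℓ) (Fin ℓ) ℂ) (h : (M * Mᴴ).PosDef) :
    IsUnit M := by
  have hd := h.isUnit
  rw [Matrix.isUnit_iff_isUnit_det] at hd ⊢
  rw [Matrix.det_mul] at hd
  exact isUnit_of_mul_isUnit_left hd

lemma aux_posDef_of_rank {ℓ : ℕ} (W : Matrix (Fin ℓ) (Fin ℓ ⊕ Fin ℓ) ℂ) (h : W.rank = ℓ) :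
    (W * Wᴴ).PosDef := by
  refine posDef_iff_dotProduct_mulVec.mpr ⟨Matrix.isHermitian_mul_conjTranspose_self W, fun x hx => ?_⟩
  have hWH : Function.Injective Wᴴ.mulVecLin := by
    rw [← LinearMap.ker_eq_bot]
    have h1 := LinearMap.finrank_range_add_finrank_ker Wᴴ.mulVecLin
    have h2 : Wᴴ.rank = ℓ := by rw [Matrix.rank_conjTranspose, h]
    rw [Matrix.rank] at h2
    rw [h2] at h1
    simp only [Module.finrank_pi, Fintype.card_fin] at h1
    have : Module.finrank ℂ (LinearMap.ker Wᴴ.mulVecLin) = 0 := by omega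
    exact Submodule.finrank_eq_zero.mp this
  have hx' : Wᴴ *ᵥ x ≠ 0 := by
    intro hc
    exact hx (by simpa using hWH (a₁ := x) (a₂ := 0) (by simpa using hc))
  have : star x ⬝ᵥ (W * Wᴴ) *ᵥ x = star (Wᴴ *ᵥ x) ⬝ᵥ (Wᴴ *ᵥ x) := by
    rw [star_mulVec, conjTranspose_conjTranspose, ← mulVec_mulVec, dotProduct_mulVec]
  rw [this]
  exact Matrix.dotProduct_star_self_pos_iff.mpr hx'

lemma norm_le_aux {ℓ : ℕ} (P Q : Matrix (Fin ℓ) (Fin ℓ) ℂ)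
    (hdiff : (Q * Qᴴ - P * Pᴴ).PosSemidef) (hQ : IsUnit Q)
    (u v : Fin ℓ → ℂ) (huv : Q *ᵥ v + P *ᵥ u = 0) :
    ‖(WithLp.equiv 2 (Fin ℓ → ℂ)).symm v‖ ≤ ‖(WithLp.equiv 2 (Fin ℓ → ℂ)).symm u‖ := by
  set e := (WithLp.equiv 2 (Fin ℓ → ℂ)).symm with he
  have hQH : IsUnit Qᴴ := by
    rw [Matrix.isUnit_iff_isUnit_det] at hQ ⊢
    rw [Matrix.det_conjTranspose]
    exact hQ.star
  obtain ⟨w, hw⟩ : ∃ w, Qᴴ *ᵥ w = v := by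
    refine ⟨Qᴴ⁻¹ *ᵥ v, ?_⟩
    rw [mulVec_mulVec, Matrix.mul_nonsing_inv _ ((Matrix.isUnit_iff_isUnit_det Qᴴ).mp hQH),
      one_mulVec]
  set z := Pᴴ *ᵥ w with hz
  have key : star v ⬝ᵥ v = -(star u ⬝ᵥ z) := by
    have h1 : star v ⬝ᵥ v = star (Q *ᵥ v) ⬝ᵥ w := by
      rw [star_mulVec, ← dotProduct_mulVec, hw]
    have h2 : Q *ᵥ v = -(P *ᵥ u) := by
      rw [eq_neg_iff_add_eq_zero]; exact huv
    rw [h1, h2, star_neg, neg_dotProduct, star_mulVec, ← dotProduct_mulVec, ← hz]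
  have hinner : ∀ a b : Fin ℓ → ℂ, (inner ℂ (e a) (e b) : ℂ) = star a ⬝ᵥ b := fun a b =>
    dotProduct_comm b (star a)
  have hnorm : ∀ a : Fin ℓ → ℂ, ‖e a‖ ^ 2 = (star a ⬝ᵥ a).re := by
    intro a
    rw [← inner_self_eq_norm_sq (𝕜 := ℂ) (e a), hinner a a]
    rfl
  have hzv : ‖e z‖ ≤ ‖e v‖ := by
    have h3 : star z ⬝ᵥ z = star w ⬝ᵥ (P * Pᴴ) *ᵥ w := by
      simp [hz, star_mulVec, dotProduct_mulVec, vecMul_vecMul]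
    have h4 : star v ⬝ᵥ v = star w ⬝ᵥ (Q * Qᴴ) *ᵥ w := by
      simp [← hw, star_mulVec, dotProduct_mulVec, vecMul_vecMul]
    have h5 := hdiff.dotProduct_mulVec_nonneg w
    rw [sub_mulVec, dotProduct_sub, sub_nonneg] at h5
    have h7 : ‖e z‖ ^ 2 ≤ ‖e v‖ ^ 2 := by
      rw [hnorm, hnorm, h3, h4]; exact (Complex.le_def.mp h5).1
    exact (pow_le_pow_iff_left₀ (norm_nonneg _) (norm_nonneg _) two_ne_zero).mp h7
  have hmain : ‖e v‖ ^ 2 ≤ ‖e u‖ * ‖e v‖ := by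
    calc ‖e v‖ ^ 2 = (star v ⬝ᵥ v).re := hnorm v
    _ = (-(inner ℂ (e u) (e z) : ℂ)).re := by rw [key, hinner]
    _ ≤ ‖(inner ℂ (e u) (e z) : ℂ)‖ := by
        rw [Complex.neg_re]
        calc -(inner ℂ (e u) (e z) : ℂ).re ≤ |(inner ℂ (e u) (e z) : ℂ).re| := neg_le_abs _
        _ ≤ ‖(inner ℂ (e u) (e z) : ℂ)‖ := Complex.abs_re_le_norm _
    _ ≤ ‖e u‖ * ‖e z‖ := norm_inner_le_norm _ _
    _ ≤ ‖e u‖ * ‖e v‖ := mul_le_mul_of_nonneg_left hzv (norm_nonneg _)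
  rcases eq_or_lt_of_le (norm_nonneg (e v)) with h0 | h0
  · rw [← h0]; exact norm_nonneg _
  · rw [pow_two] at hmain
    exact le_of_mul_le_mul_right hmain h0

lemma kerRel_mem_iff {ℓ : ℕ} (W₁ W₂ : Matrix (Fin ℓ) (Fin ℓ) ℂ)
    (p : (Fin ℓ → ℂ) × (Fin ℓ → ℂ)) :
    p ∈ kerRel W₁ W₂ ↔ W₁ *ᵥ p.1 + W₂ *ᵥ p.2 = 0 := by
  simp [kerRel, LinearMap.mem_ker]

lemma kerRel_isDissipative {ℓ : ℕ} (W₁ W₂ : Matrix (Fin ℓ) (Fin ℓ) ℂ)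
    (hrank : (Matrix.fromCols W₁ W₂).rank = ℓ)
    (hpos : (W₁ * W₂ᴴ + W₂ * W₁ᴴ).PosSemidef) :
    IsDissipativeRel (kerRel W₁ W₂) := by
  intro p hp
  rw [kerRel_mem_iff] at hp
  obtain ⟨f, g⟩ := p
  simp only at hp ⊢
  set Q := W₁ + W₂ with hQdef
  set P := W₁ - W₂ with hPdef
  -- Q * Qᴴ is positive definite
  have hWWH : (Matrix.fromCols W₁ W₂ * (Matrix.fromCols W₁ W₂)ᴴ).PosDef :=
    aux_posDef_of_rank _ hrank
  have hWW : Matrix.fromCols W₁ W₂ * (Matrix.fromCols W₁ W₂)ᴴ =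
      W₁ * W₁ᴴ + W₂ * W₂ᴴ := by
    rw [conjTranspose_fromCols_eq_fromRows_conjTranspose, fromCols_mul_fromRows]
  rw [hWW] at hWWH
  have hQQ : (Q * Qᴴ).PosDef := by
    have : Q * Qᴴ = (W₁ * W₁ᴴ + W₂ * W₂ᴴ) + (W₁ * W₂ᴴ + W₂ * W₁ᴴ) := by
      simp only [hQdef, conjTranspose_add]
      noncomm_ring
    rw [this]
    exact hWWH.add_posSemidef hpos
  have hQ : IsUnit Q := aux_isUnit_of_posDef Q hQQ
  have hdiff : (Q * Qᴴ - P * Pᴴ).PosSemidef := by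
    have : Q * Qᴴ - P * Pᴴ = (W₁ * W₂ᴴ + W₂ * W₁ᴴ) + (W₁ * W₂ᴴ + W₂ * W₁ᴴ) := by
      simp only [hQdef, hPdef, conjTranspose_add, conjTranspose_sub]
      noncomm_ring
    rw [this]
    exact hpos.add hpos
  have huv : Q *ᵥ (f + g) + P *ᵥ (f - g) = 0 := by
    have : Q *ᵥ (f + g) + P *ᵥ (f - g) = (W₁ *ᵥ f + W₂ *ᵥ g) + (W₁ *ᵥ f + W₂ *ᵥ g) := by
      simp only [hQdef, hPdef, add_mulVec, sub_mulVec, mulVec_add, mulVec_sub]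
      abel
    rw [this, hp, add_zero]
  have hn := norm_le_aux P Q hdiff hQ (f - g) (f + g) huv
  set e := (WithLp.equiv 2 (Fin ℓ → ℂ)).symm with he
  have hadd : e (f + g) = e f + e g := rfl
  have hsub : e (f - g) = e f - e g := rfl
  rw [hadd, hsub] at hn
  have hsq : ‖e f + e g‖ ^ 2 ≤ ‖e f - e g‖ ^ 2 :=
    pow_le_pow_left₀ (norm_nonneg _) hn 2
  have h1 := norm_add_sq (𝕜 := ℂ) (e f) (e g)
  have h2 := norm_sub_sq (𝕜 := ℂ) (e f) (e g)
  have hre : RCLike.re (inner ℂ (e f) (e g) : ℂ) = (star f ⬝ᵥ g).re := by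
    rw [show inner ℂ (e f) (e g) = star f ⬝ᵥ g from dotProduct_comm g (star f)]
    rfl
  rw [h1, h2] at hsq
  rw [← hre]
  linarith

lemma finrank_kerRel {ℓ : ℕ} (W₁ W₂ : Matrix (Fin ℓ) (Fin ℓ) ℂ)
    (hrank : (Matrix.fromCols W₁ W₂).rank = ℓ) :
    Module.finrank ℂ (kerRel W₁ W₂) = ℓ := by
  set φ := (W₁.mulVecLin.comp (LinearMap.fst ℂ (Fin ℓ → ℂ) (Fin ℓ → ℂ)) +
      W₂.mulVecLin.comp (LinearMap.snd ℂ (Fin ℓ → ℂ) (Fin ℓ → ℂ))) with hφ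
  have hrange : LinearMap.range φ = LinearMap.range (Matrix.fromCols W₁ W₂).mulVecLin := by
    apply le_antisymm
    · rintro y ⟨⟨f, g⟩, rfl⟩
      exact ⟨Sum.elim f g, by simp [hφ, fromCols_mulVec_sumElim]⟩
    · rintro y ⟨x, rfl⟩
      refine ⟨(x ∘ Sum.inl, x ∘ Sum.inr), ?_⟩
      have hx : Sum.elim (x ∘ Sum.inl) (x ∘ Sum.inr) = x := by
        funext i; cases i <;> rfl
      simp [hφ, -fromCols_mulVec, ← fromCols_mulVec_sumElim, hx]
  have h1 := LinearMap.finrank_range_add_finrank_ker φ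
  rw [hrange] at h1
  have h2 : Module.finrank ℂ (LinearMap.range (Matrix.fromCols W₁ W₂).mulVecLin) = ℓ :=
    hrank
  have h3 : Module.finrank ℂ ((Fin ℓ → ℂ) × (Fin ℓ → ℂ)) = ℓ + ℓ := by
    simp [Module.finrank_prod]
  rw [h2, h3] at h1
  have : Module.finrank ℂ (LinearMap.ker φ) = ℓ := by omega
  exact this

lemma finrank_le_of_dissipative {ℓ : ℕ} {T : Submodule ℂ ((Fin ℓ → ℂ) × (Fin ℓ → ℂ))}
    (hT : IsDissipativeRel T) : Module.finrank ℂ T ≤ ℓ := by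
  set S : T →ₗ[ℂ] (Fin ℓ → ℂ) :=
    (LinearMap.fst ℂ (Fin ℓ → ℂ) (Fin ℓ → ℂ) - LinearMap.snd ℂ (Fin ℓ → ℂ) (Fin ℓ → ℂ)).comp
      T.subtype with hS
  have hinj : Function.Injective S := by
    rw [← LinearMap.ker_eq_bot, LinearMap.ker_eq_bot']
    intro p hp
    have hps : (p : (Fin ℓ → ℂ) × (Fin ℓ → ℂ)).1 - (p : (Fin ℓ → ℂ) × (Fin ℓ → ℂ)).2 = 0 := by
      simpa [hS] using hp
    have heq : (p : (Fin ℓ → ℂ) × (Fin ℓ → ℂ)).2 = (p : (Fin ℓ → ℂ) × (Fin ℓ → ℂ)).1 := by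
      rw [sub_eq_zero] at hps; exact hps.symm
    have h0 : (p : (Fin ℓ → ℂ) × (Fin ℓ → ℂ)).1 = 0 := by
      by_contra hne
      have hpos : 0 < star (p : (Fin ℓ → ℂ) × (Fin ℓ → ℂ)).1 ⬝ᵥ (p : (Fin ℓ → ℂ) × (Fin ℓ → ℂ)).1 :=
        Matrix.dotProduct_star_self_pos_iff.mpr hne
      have := hT (p : (Fin ℓ → ℂ) × (Fin ℓ → ℂ)) p.2
      rw [heq] at this
      exact absurd this (not_le.mpr (Complex.lt_def.mp hpos).1)
    have h2 : (p : (Fin ℓ → ℂ) × (Fin ℓ → ℂ)).2 = 0 := by rw [heq, h0]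
    exact Subtype.ext (Prod.ext h0 h2)
  calc Module.finrank ℂ T ≤ Module.finrank ℂ (Fin ℓ → ℂ) :=
        LinearMap.finrank_le_finrank_of_injective hinj
  _ = ℓ := by simp

theorem kerRel_isMaxDissipative (ℓ : ℕ) (W₁ W₂ : Matrix (Fin ℓ) (Fin ℓ) ℂ)
    (hrank : (Matrix.fromCols W₁ W₂).rank = ℓ)
    (hpos : (W₁ * W₂ᴴ + W₂ * W₁ᴴ).PosSemidef) :
    IsMaxDissipativeRel (kerRel W₁ W₂) := by
  refine ⟨kerRel_isDissipative W₁ W₂ hrank hpos, fun T' hT' hle => ?_⟩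
  exact (Submodule.eq_of_le_of_finrank_le hle
    (by rw [finrank_kerRel W₁ W₂ hrank]; exact finrank_le_of_dissipative hT')).symm
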